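/- If two phase automata A₁ and A₂ share the same structure (Q, ι, δ) and A₂ is a strengthening of A₁ (φ₂ q v ⊆ φ₁ q v for all q, v), and A₂ is inductive with respect to TS, then A₁ is a phase invariant of TS. -/
import Mathlib


/-- If a strengthening of a phase automaton is inductive, the original
    automaton is a phase invariant. -/
theorem inductive_strengthening_implies_phase_invariant
    {S V Q : Type*}
    (Init : Set S) (TR : Set (S × S)) (ι : Q)
    (δ : Q → Q → V → Set (S × S)) (φ₁ φ₂ : Q → V → Set S)
    (hstr : ∀ q v, φ₂ q v ⊆ φ₁ q v)
    (hinit : ∀ v, Init ⊆ φ₂ ι v)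
    (hind : ∀ q p v σ σ', σ ∈ φ₂ q v → (σ, σ') ∈ δ q p v → σ' ∈ φ₂ p v)
    (hcov : ∀ q v σ σ', σ ∈ φ₂ q v → (σ, σ') ∈ TR → ∃ p, (σ, σ') ∈ δ q p v) :
    ∀ (n : ℕ) (σ : ℕ → S), σ 0 ∈ Init → (∀ i < n, (σ i, σ (i + 1)) ∈ TR) →
      ∀ v : V, ∃ qs : ℕ → Q, qs 0 = ι ∧
        (∀ i < n, (σ i, σ (i + 1)) ∈ δ (qs i) (qs (i + 1)) v) ∧
        (∀ i ≤ n, σ i ∈ φ₁ (qs i) v) := by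
  intro n σ hinitσ htr v
  -- strengthen: build qs with φ₂ everywhere
  suffices h : ∃ qs : ℕ → Q, qs 0 = ι ∧
      (∀ i < n, (σ i, σ (i + 1)) ∈ δ (qs i) (qs (i + 1)) v) ∧
      (∀ i ≤ n, σ i ∈ φ₂ (qs i) v) by
    obtain ⟨qs, h0, he, hp⟩ := h
    exact ⟨qs, h0, he, fun i hi => hstr _ _ (hp i hi)⟩
  induction n with
  | zero =>
    refine ⟨fun _ => ι, rfl, fun i hi => absurd hi (Nat.not_lt_zero i), ?_⟩
    intro i hi
    interval_cases i
    exact hinit v hinitσ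
  | succ n ih =>
    obtain ⟨qs, h0, he, hp⟩ := ih (fun i hi => htr i (hi.trans (Nat.lt_succ_self n)))
    obtain ⟨p, hpδ⟩ := hcov (qs n) v (σ n) (σ (n + 1)) (hp n le_rfl)
      (htr n (Nat.lt_succ_self n))
    refine ⟨fun i => if i ≤ n then qs i else p, by simp [h0], ?_, ?_⟩
    · intro i hi
      rcases Nat.lt_succ_iff_lt_or_eq.mp hi with h | h
      · simpa [Nat.le_of_lt h, Nat.succ_le_of_lt h] using he i h
      · subst h
        simpa using hpδ
    · intro i hi
      rcases Nat.le_succ_iff.mp hi with h | h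
      · simpa [h] using hp i h
      · have : ¬ i ≤ n := by omega
        simp only [this, if_false]
        subst h
        exact hind _ _ _ _ _ (hp n le_rfl) hpδ
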